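/- Let r > 1 be real, let K be a number field, and let d₁ < d₂ < ⋯ < d_M be r-mighty norms of K. Then the closure of σ_{r,K}(I_K) has at least M + 1 connected components. -/

import Mathlib

open NumberField

/-- The ideal divisor function `σ_{r,K}(I) = ∑_{J ∣ I} N(J)^{-r}`. -/
noncomputable def sigmaK (K : Type*) [Field K] [NumberField K] (r : ℝ)
    (I : Ideal (𝓞 K)) : ℝ :=
  ∑' J : {J : Ideal (𝓞 K) // J ∣ I}, (Ideal.absNorm (J : Ideal (𝓞 K)) : ℝ) ^ (-r)

/-- `d > 1` is an `r`-mighty norm of `K` if `d` is the norm of some nonzero prime ideal of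
`𝓞_K` and `1 + d^{-r} > ∏_{𝔭 prime, N(𝔭) > d} (1 − N(𝔭)^{-r})⁻¹`. -/
def IsMightyNorm (K : Type*) [Field K] [NumberField K] (r : ℝ) (d : ℕ) : Prop :=
  1 < d ∧ (∃ P : Ideal (𝓞 K), P.IsPrime ∧ P ≠ ⊥ ∧ Ideal.absNorm P = d) ∧
    ∏' P : {P : Ideal (𝓞 K) // P.IsPrime ∧ d < Ideal.absNorm P},
        (1 - (Ideal.absNorm (P : Ideal (𝓞 K)) : ℝ) ^ (-r))⁻¹
      < 1 + (d : ℝ) ^ (-r)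

namespace Stmt16Aux

open Ideal UniqueFactorizationMonoid

variable {K : Type*} [Field K] [NumberField K] {r : ℝ}

/-- The norm-power function, as a monoid hom on ideals. -/
noncomputable def gH (K : Type*) [Field K] [NumberField K] (r : ℝ) :
    Ideal (𝓞 K) →* ℝ where
  toFun J := (Ideal.absNorm J : ℝ) ^ (-r)
  map_one' := by
    show (Ideal.absNorm (1 : Ideal (𝓞 K)) : ℝ) ^ (-r) = 1
    rw [Ideal.one_eq_top, Ideal.absNorm_top]
    simp
  map_mul' A B := by
    simp only [_root_.map_mul, Nat.cast_mul]
    exact Real.mul_rpow (Nat.cast_nonneg _) (Nat.cast_nonneg _)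

lemma gH_apply (J : Ideal (𝓞 K)) : gH K r J = (Ideal.absNorm J : ℝ) ^ (-r) := rfl

lemma gH_nonneg (J : Ideal (𝓞 K)) : 0 ≤ gH K r J :=
  Real.rpow_nonneg (Nat.cast_nonneg _) _

lemma rpow_neg_anti {a b : ℕ} (hr : 0 < r) (ha : 0 < a) (hab : a ≤ b) :
    (b : ℝ) ^ (-r) ≤ (a : ℝ) ^ (-r) := by
  have ha' : (0:ℝ) < a := by exact_mod_cast ha
  have hb' : (0:ℝ) < b := lt_of_lt_of_le ha' (by exact_mod_cast hab)
  rw [Real.rpow_neg ha'.le, Real.rpow_neg hb'.le]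
  have h1 : (0:ℝ) < (a:ℝ) ^ r := Real.rpow_pos_of_pos ha' _
  have h2 : (a:ℝ) ^ r ≤ (b:ℝ) ^ r :=
    Real.rpow_le_rpow ha'.le (by exact_mod_cast hab) hr.le
  exact inv_anti₀ h1 h2

lemma gH_lt_one (hr : 0 < r) {J : Ideal (𝓞 K)} (h : 2 ≤ Ideal.absNorm J) :
    gH K r J < 1 := by
  rw [gH_apply]
  exact Real.rpow_lt_one_of_one_lt_of_neg (by exact_mod_cast h.trans_lt' one_lt_two) (by linarith)

lemma gH_le_half (hr : 1 < r) {J : Ideal (𝓞 K)} (h : 2 ≤ Ideal.absNorm J) :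
    gH K r J ≤ 1 / 2 := by
  rw [gH_apply]
  calc (Ideal.absNorm J : ℝ) ^ (-r) ≤ (2:ℝ) ^ (-r) := by
        have := rpow_neg_anti (r := r) (a := 2) (b := Ideal.absNorm J) (by linarith) two_pos h
        simpa using this
    _ ≤ (2:ℝ) ^ (-1 : ℝ) :=
        Real.rpow_le_rpow_of_exponent_le one_le_two (by linarith)
    _ = 1 / 2 := by
        rw [Real.rpow_neg_one]
        norm_num

lemma two_le_absNorm {P : Ideal (𝓞 K)} (hP : P.IsPrime) (h0 : P ≠ ⊥) :
    2 ≤ Ideal.absNorm P := by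
  have h1 : Ideal.absNorm P ≠ 0 := by
    rw [Ne, Ideal.absNorm_eq_zero_iff]
    exact h0
  have h2 : Ideal.absNorm P ≠ 1 := by
    rw [Ne, Ideal.absNorm_eq_one_iff]
    exact hP.ne_top
  omega

lemma exists_rat_prime {P : Ideal (𝓞 K)} (hP : P.IsPrime) (h0 : P ≠ ⊥) :
    ∃ q : ℕ, q.Prime ∧ ((q : ℕ) : 𝓞 K) ∈ P := by
  have key : ∀ m : ℕ, m ≠ 0 → ((m : ℕ) : 𝓞 K) ∈ P → ∃ q : ℕ, q.Prime ∧ ((q : ℕ) : 𝓞 K) ∈ P := by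
    intro m
    induction m using Nat.strong_induction_on with
    | _ m ih =>
      intro hm0 hmem
      rcases eq_or_ne m 1 with rfl | hm1
      · exfalso
        apply hP.ne_top
        rw [Ideal.eq_top_iff_one]
        simpa using hmem
      · have hq : (m.minFac).Prime := Nat.minFac_prime hm1
        obtain ⟨k, hk⟩ := m.minFac_dvd
        have hmul : ((m.minFac : ℕ) : 𝓞 K) * ((k : ℕ) : 𝓞 K) ∈ P := by
          rw [← Nat.cast_mul, ← hk]
          exact hmem
        rcases hP.mem_or_mem hmul with h | h
        · exact ⟨m.minFac, hq, h⟩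
        · have hk0 : k ≠ 0 := by
            intro h'
            rw [h', mul_zero] at hk
            exact hm0 hk
          have hklt : k < m := by
            have : 2 ≤ m.minFac := hq.two_le
            calc k < 2 * k := by omega
              _ ≤ m.minFac * k := by
                  apply Nat.mul_le_mul_right
                  exact this
              _ = m := hk.symm
          exact ih k hklt hk0 h
  apply key (Ideal.absNorm P)
  · rw [Ne, Ideal.absNorm_eq_zero_iff]
    exact h0
  · exact Ideal.absNorm_mem P

lemma norm_span_natCast (q : ℕ) :
    Ideal.absNorm (Ideal.span {((q : ℕ) : 𝓞 K)}) = q ^ Module.finrank ℤ (𝓞 K) := by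
  rw [Ideal.absNorm_span_singleton]
  rw [show ((q : ℕ) : 𝓞 K) = algebraMap ℤ (𝓞 K) (q : ℤ) by push_cast; rfl]
  rw [Algebra.norm_algebraMap_of_basis (Module.Free.chooseBasis ℤ (𝓞 K)) (q : ℤ)]
  rw [Module.finrank_eq_card_chooseBasisIndex, Int.natAbs_pow, Int.natAbs_natCast]

lemma dvd_absNorm_of_mem {P : Ideal (𝓞 K)} {q : ℕ} (hq : q.Prime) (hmem : ((q : ℕ) : 𝓞 K) ∈ P)
    (hP : P.IsPrime) (h0 : P ≠ ⊥) : q ∣ Ideal.absNorm P := by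
  have hPd : P ∣ Ideal.span {((q : ℕ) : 𝓞 K)} := by
    rw [Ideal.dvd_iff_le]
    exact (Ideal.span_singleton_le_iff_mem _).mpr hmem
  have hdvd : Ideal.absNorm P ∣ q ^ Module.finrank ℤ (𝓞 K) := by
    rw [← norm_span_natCast]
    exact map_dvd Ideal.absNorm hPd
  obtain ⟨j, _, hje⟩ := (Nat.dvd_prime_pow hq).mp hdvd
  have hj0 : j ≠ 0 := by
    intro h
    rw [h, pow_zero] at hje
    have := two_le_absNorm hP h0
    omega
  rw [hje]
  exact dvd_pow_self q hj0

lemma card_le_finrank {q : ℕ} (hq : q.Prime) (S : Finset (Ideal (𝓞 K)))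
    (hS : ∀ P ∈ S, P.IsPrime ∧ P ≠ ⊥ ∧ ((q : ℕ) : 𝓞 K) ∈ P) :
    S.card ≤ Module.finrank ℤ (𝓞 K) := by
  classical
  have hcop : (↑S : Set (Ideal (𝓞 K))).Pairwise (Function.onFun IsCoprime id) := by
    intro P hP Q hQ hne
    have hPm := ((hS P hP).1.isMaximal (hS P hP).2.1)
    have hQm := ((hS Q hQ).1.isMaximal (hS Q hQ).2.1)
    have := hPm.coprime_of_ne hQm hne
    simpa [Function.onFun, Ideal.isCoprime_iff_sup_eq] using this
  have hprod : (∏ P ∈ S, P) ∣ Ideal.span {((q : ℕ) : 𝓞 K)} := by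
    apply Finset.prod_dvd_of_coprime hcop
    intro P hP
    rw [Ideal.dvd_iff_le]
    exact (Ideal.span_singleton_le_iff_mem _).mpr (hS P hP).2.2
  have h1 : q ^ S.card ∣ q ^ Module.finrank ℤ (𝓞 K) := by
    calc q ^ S.card = ∏ _P ∈ S, q := by rw [Finset.prod_const]
      _ ∣ ∏ P ∈ S, Ideal.absNorm P := by
          apply Finset.prod_dvd_prod_of_dvd
          intro P hP
          exact dvd_absNorm_of_mem hq (hS P hP).2.2 (hS P hP).1 (hS P hP).2.1
      _ = Ideal.absNorm (∏ P ∈ S, P) := (map_prod Ideal.absNorm _ S).symm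
      _ ∣ Ideal.absNorm (Ideal.span {((q : ℕ) : 𝓞 K)}) := map_dvd Ideal.absNorm hprod
      _ = q ^ Module.finrank ℤ (𝓞 K) := norm_span_natCast q
  have h2 : q ^ S.card ≤ q ^ Module.finrank ℤ (𝓞 K) :=
    Nat.le_of_dvd (pow_pos hq.pos _) h1
  exact (Nat.pow_le_pow_iff_right hq.one_lt).mp h2

lemma summable_primes (hr : 1 < r) :
    Summable (fun P : {P : Ideal (𝓞 K) // P.IsPrime ∧ P ≠ ⊥} =>
      (Ideal.absNorm (P : Ideal (𝓞 K)) : ℝ) ^ (-r)) := by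
  classical
  set n := Module.finrank ℤ (𝓞 K) with hn
  have hsum : Summable (fun m : ℕ => (m : ℝ) ^ (-r)) :=
    Real.summable_nat_rpow.mpr (by linarith)
  have hex : ∀ P : {P : Ideal (𝓞 K) // P.IsPrime ∧ P ≠ ⊥},
      ∃ q : ℕ, q.Prime ∧ ((q : ℕ) : 𝓞 K) ∈ (P : Ideal (𝓞 K)) :=
    fun P => exists_rat_prime P.2.1 P.2.2
  choose ρ hρ1 hρ2 using hex
  apply summable_of_sum_le (c := (n : ℝ) * ∑' m : ℕ, (m : ℝ) ^ (-r))
  · intro P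
    exact Real.rpow_nonneg (Nat.cast_nonneg _) _
  · intro u
    rw [← Finset.sum_fiberwise_of_maps_to (g := ρ) (t := u.image ρ)
      (fun x hx => Finset.mem_image_of_mem _ hx)]
    have inner : ∀ q ∈ u.image ρ,
        ∑ P ∈ u.filter (fun P => ρ P = q), (Ideal.absNorm (P : Ideal (𝓞 K)) : ℝ) ^ (-r)
          ≤ (n : ℝ) * (q : ℝ) ^ (-r) := by
      intro q hq
      obtain ⟨P₀, _, hP₀⟩ := Finset.mem_image.mp hq
      have hqp : q.Prime := hP₀ ▸ hρ1 P₀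
      have hcard : (u.filter (fun P => ρ P = q)).card ≤ n := by
        have hcardeq : ((u.filter (fun P => ρ P = q)).image Subtype.val).card
            = (u.filter (fun P => ρ P = q)).card :=
          Finset.card_image_of_injective _ Subtype.val_injective
        rw [← hcardeq]
        apply card_le_finrank hqp
        intro P hP
        obtain ⟨P', hP', rfl⟩ := Finset.mem_image.mp hP
        have hfil := Finset.mem_filter.mp hP'
        exact ⟨P'.2.1, P'.2.2, hfil.2 ▸ hρ2 P'⟩
      calc ∑ P ∈ u.filter (fun P => ρ P = q), (Ideal.absNorm (P : Ideal (𝓞 K)) : ℝ) ^ (-r)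
          ≤ (u.filter (fun P => ρ P = q)).card • ((q : ℝ) ^ (-r)) := by
            apply Finset.sum_le_card_nsmul
            intro P hP
            have hfil := Finset.mem_filter.mp hP
            apply rpow_neg_anti (by linarith) hqp.pos
            apply Nat.le_of_dvd
            · have := two_le_absNorm P.2.1 P.2.2
              omega
            · have hmem := hρ2 P
              rw [hfil.2] at hmem
              exact dvd_absNorm_of_mem hqp hmem P.2.1 P.2.2
        _ ≤ (n : ℝ) * (q : ℝ) ^ (-r) := by
            rw [nsmul_eq_mul]
            apply mul_le_mul_of_nonneg_right _ (Real.rpow_nonneg (Nat.cast_nonneg _) _)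
            exact_mod_cast hcard
    calc ∑ q ∈ u.image ρ, ∑ P ∈ u.filter (fun P => ρ P = q),
          (Ideal.absNorm (P : Ideal (𝓞 K)) : ℝ) ^ (-r)
        ≤ ∑ q ∈ u.image ρ, (n : ℝ) * (q : ℝ) ^ (-r) := Finset.sum_le_sum inner
      _ = (n : ℝ) * ∑ q ∈ u.image ρ, (q : ℝ) ^ (-r) := by rw [Finset.mul_sum]
      _ ≤ (n : ℝ) * ∑' m : ℕ, (m : ℝ) ^ (-r) := by
          apply mul_le_mul_of_nonneg_left _ (Nat.cast_nonneg _)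
          exact Summable.sum_le_tsum _ (fun m _ => Real.rpow_nonneg (Nat.cast_nonneg _) _) hsum

lemma two_le_absNorm_T {n : ℕ} (P : {P : Ideal (𝓞 K) // P.IsPrime ∧ n < Ideal.absNorm P}) :
    2 ≤ Ideal.absNorm (P : Ideal (𝓞 K)) := by
  apply two_le_absNorm P.2.1
  intro h
  have := P.2.2
  rw [h, Ideal.absNorm_bot] at this
  omega

lemma ne_bot_T {n : ℕ} (P : {P : Ideal (𝓞 K) // P.IsPrime ∧ n < Ideal.absNorm P}) :
    (P : Ideal (𝓞 K)) ≠ ⊥ := by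
  intro h
  have := P.2.2
  rw [h, Ideal.absNorm_bot] at this
  omega

/-- Embedding of the primes of norm `> n` into the nonzero primes. -/
def embT (n : ℕ) (P : {P : Ideal (𝓞 K) // P.IsPrime ∧ n < Ideal.absNorm P}) :
    {P : Ideal (𝓞 K) // P.IsPrime ∧ P ≠ ⊥} :=
  ⟨P.1, P.2.1, ne_bot_T P⟩

lemma embT_inj (n : ℕ) : Function.Injective (embT (K := K) n) := by
  intro P Q h
  have h2 : (embT (K := K) n P).1 = (embT (K := K) n Q).1 := by rw [h]
  exact Subtype.ext h2

lemma summable_primes_T (hr : 1 < r) (n : ℕ) :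
    Summable (fun P : {P : Ideal (𝓞 K) // P.IsPrime ∧ n < Ideal.absNorm P} =>
      (Ideal.absNorm (P : Ideal (𝓞 K)) : ℝ) ^ (-r)) := by
  have h := (summable_primes (K := K) hr).comp_injective (embT_inj (K := K) n)
  exact h.congr (fun P => rfl)

lemma summable_cexp_multipliable_aux {ι κ : Type*} (f : ι → κ → ℝ)
    (hfn : ∀ x n, 0 < f n x) (hf : ∀ x, Summable fun n => Real.log (f n x)) :
    ∀ x, Multipliable fun n => f n x :=
  fun x => Real.multipliable_of_summable_log (hfn x) (hf x)

lemma multipliable_primes_T (hr : 1 < r) (n : ℕ) :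
    Multipliable (fun P : {P : Ideal (𝓞 K) // P.IsPrime ∧ n < Ideal.absNorm P} =>
      (1 - (Ideal.absNorm (P : Ideal (𝓞 K)) : ℝ) ^ (-r))⁻¹) := by
  have hfacts : ∀ P : {P : Ideal (𝓞 K) // P.IsPrime ∧ n < Ideal.absNorm P},
      0 ≤ (Ideal.absNorm (P : Ideal (𝓞 K)) : ℝ) ^ (-r) ∧
      (Ideal.absNorm (P : Ideal (𝓞 K)) : ℝ) ^ (-r) ≤ 1 / 2 := by
    intro P
    exact ⟨Real.rpow_nonneg (Nat.cast_nonneg _) _, gH_le_half hr (two_le_absNorm_T P)⟩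
  refine summable_cexp_multipliable_aux
    (f := fun (P : {P : Ideal (𝓞 K) // P.IsPrime ∧ n < Ideal.absNorm P}) (_ : Unit) =>
      (1 - (Ideal.absNorm (P : Ideal (𝓞 K)) : ℝ) ^ (-r))⁻¹) ?_ ?_ ()
  · intro _ P
    have h := hfacts P
    have h2 : (0:ℝ) < 1 - (Ideal.absNorm (P : Ideal (𝓞 K)) : ℝ) ^ (-r) := by linarith [h.2]
    positivity
  · intro _
    refine Summable.of_nonneg_of_le ?_ ?_ ((summable_primes_T hr n).mul_left 2)
    · intro P
      apply Real.log_nonneg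
      have h := hfacts P
      have h2 : (0:ℝ) < 1 - (Ideal.absNorm (P : Ideal (𝓞 K)) : ℝ) ^ (-r) := by linarith [h.2]
      rw [one_le_inv_iff₀]
      constructor
      · exact h2
      · linarith [h.1]
    · intro P
      set x := (Ideal.absNorm (P : Ideal (𝓞 K)) : ℝ) ^ (-r) with hx
      have h := hfacts P
      have h2 : (0:ℝ) < 1 - x := by linarith [h.2]
      have hinvpos : (0:ℝ) < (1 - x)⁻¹ := by positivity
      calc Real.log ((1 - x)⁻¹) ≤ (1 - x)⁻¹ - 1 := Real.log_le_sub_one_of_pos hinvpos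
        _ = x * (1 - x)⁻¹ := by field_simp; ring
        _ ≤ x * 2 := by
            apply mul_le_mul_of_nonneg_left _ h.1
            rw [inv_le_comm₀ h2 two_pos]
            linarith [h.2]
        _ = 2 * x := by ring

lemma real_prod_le_tprod {ι : Type*} {f : ι → ℝ} (s : Finset ι) (h1 : ∀ i, 1 ≤ f i)
    (hf : Multipliable f) : ∏ i ∈ s, f i ≤ ∏' i, f i := by
  classical
  apply ge_of_tendsto hf.hasProd
  filter_upwards [Filter.eventually_ge_atTop s] with t hst
  have hsub : s ⊆ t := hst
  calc ∏ i ∈ s, f i ≤ (∏ i ∈ s, f i) * ∏ i ∈ t \ s, f i := by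
        apply le_mul_of_one_le_right
        · exact Finset.prod_nonneg (fun i _ => le_trans zero_le_one (h1 i))
        · calc (1:ℝ) = ∏ _i ∈ t \ s, (1:ℝ) := by rw [Finset.prod_const_one]
            _ ≤ ∏ i ∈ t \ s, f i :=
              Finset.prod_le_prod (fun i _ => zero_le_one) (fun i _ => h1 i)
    _ = ∏ i ∈ t, f i := by rw [mul_comm, Finset.prod_sdiff hsub]

lemma upper {I P : Ideal (𝓞 K)} (hI : I ≠ 0) (hP : P.IsPrime) (hdvd : P ∣ I) :
    1 + (Ideal.absNorm P : ℝ) ^ (-r) ≤ sigmaK K r I := by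
  classical
  letI : Fintype {J : Ideal (𝓞 K) // J ∣ I} := UniqueFactorizationMonoid.fintypeSubtypeDvd I hI
  rw [sigmaK, tsum_fintype]
  have hTd : (⊤ : Ideal (𝓞 K)) ∣ I := by rw [Ideal.dvd_iff_le]; exact le_top
  have hne : (⟨⊤, hTd⟩ : {J : Ideal (𝓞 K) // J ∣ I}) ≠ ⟨P, hdvd⟩ := by
    intro h
    exact hP.ne_top (congrArg Subtype.val h).symm
  have hpair : ∑ J ∈ ({⟨⊤, hTd⟩, ⟨P, hdvd⟩} : Finset {J : Ideal (𝓞 K) // J ∣ I}),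
      (Ideal.absNorm (J : Ideal (𝓞 K)) : ℝ) ^ (-r) = 1 + (Ideal.absNorm P : ℝ) ^ (-r) := by
    rw [Finset.sum_pair hne]
    simp [Ideal.absNorm_top]
  rw [← hpair]
  exact Finset.sum_le_sum_of_subset_of_nonneg (Finset.subset_univ _)
    (fun J _ _ => Real.rpow_nonneg (Nat.cast_nonneg _) _)

lemma lower (hr : 1 < r) (n : ℕ) {I : Ideal (𝓞 K)} (hI : I ≠ 0)
    (hd : ∀ Q : Ideal (𝓞 K), Q.IsPrime → Q ∣ I → n < Ideal.absNorm Q) :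
    sigmaK K r I ≤ ∏' P : {P : Ideal (𝓞 K) // P.IsPrime ∧ n < Ideal.absNorm P},
      (1 - (Ideal.absNorm (P : Ideal (𝓞 K)) : ℝ) ^ (-r))⁻¹ := by
  classical
  letI : Fintype {J : Ideal (𝓞 K) // J ∣ I} := UniqueFactorizationMonoid.fintypeSubtypeDvd I hI
  rw [sigmaK, tsum_fintype]
  set s := UniqueFactorizationMonoid.normalizedFactors I with hs
  set F : Finset (Ideal (𝓞 K)) := s.toFinset with hF
  have hFP : ∀ p ∈ F, Prime p := fun p hp =>
    prime_of_normalized_factor p (Multiset.mem_toFinset.mp hp)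
  have hFd : ∀ p ∈ F, p ∣ I := fun p hp =>
    dvd_of_mem_normalizedFactors (Multiset.mem_toFinset.mp hp)
  have hFisP : ∀ p ∈ F, (p : Ideal (𝓞 K)).IsPrime := fun p hp =>
    Ideal.isPrime_of_prime (hFP p hp)
  have hFnorm : ∀ p ∈ F, n < Ideal.absNorm p := fun p hp =>
    hd p (hFisP p hp) (hFd p hp)
  have hF2 : ∀ p ∈ F, 2 ≤ Ideal.absNorm p := fun p hp =>
    two_le_absNorm (hFisP p hp) (hFP p hp).ne_zero
  -- divisor facts
  have hJ0 : ∀ J : {J : Ideal (𝓞 K) // J ∣ I}, (J : Ideal (𝓞 K)) ≠ 0 := fun J =>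
    ne_zero_of_dvd_ne_zero hI J.2
  have hJle : ∀ J : {J : Ideal (𝓞 K) // J ∣ I},
      UniqueFactorizationMonoid.normalizedFactors (J : Ideal (𝓞 K)) ≤ s := fun J =>
    (UniqueFactorizationMonoid.dvd_iff_normalizedFactors_le_normalizedFactors (hJ0 J) hI).mp J.2
  have hJsub : ∀ J : {J : Ideal (𝓞 K) // J ∣ I},
      (UniqueFactorizationMonoid.normalizedFactors (J : Ideal (𝓞 K))).toFinset ⊆ F := by
    intro J x hx
    exact Multiset.mem_toFinset.mpr (Multiset.mem_of_le (hJle J) (Multiset.mem_toFinset.mp hx))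
  have hJeq : ∀ J : {J : Ideal (𝓞 K) // J ∣ I}, (J : Ideal (𝓞 K)) =
      ∏ p ∈ F, p ^ (UniqueFactorizationMonoid.normalizedFactors
        (J : Ideal (𝓞 K))).count p := by
    intro J
    conv_lhs => rw [← associated_iff_eq.mp (prod_normalizedFactors (hJ0 J))]
    exact Finset.prod_multiset_count_of_subset _ F (hJsub J)
  -- value formula
  have hval : ∀ J : {J : Ideal (𝓞 K) // J ∣ I},
      (Ideal.absNorm (J : Ideal (𝓞 K)) : ℝ) ^ (-r) =
      ∏ p ∈ F.attach, ((Ideal.absNorm (p : Ideal (𝓞 K)) : ℝ) ^ (-r)) ^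
        ((UniqueFactorizationMonoid.normalizedFactors (J : Ideal (𝓞 K))).count (p : Ideal (𝓞 K))) := by
    intro J
    have h1 : (Ideal.absNorm (J : Ideal (𝓞 K)) : ℝ) ^ (-r) = gH K r (J : Ideal (𝓞 K)) := rfl
    rw [h1]
    conv_lhs => rw [hJeq J]
    rw [map_prod]
    rw [← Finset.prod_attach F (fun p => gH K r (p ^ (UniqueFactorizationMonoid.normalizedFactors
        (J : Ideal (𝓞 K))).count p))]
    exact Finset.prod_congr rfl (fun p _ => map_pow _ _ _)
  -- the exponent-vector map
  set ψ : {J : Ideal (𝓞 K) // J ∣ I} → ({x : Ideal (𝓞 K) // x ∈ F} → ℕ) :=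
    fun J p => (UniqueFactorizationMonoid.normalizedFactors
      (J : Ideal (𝓞 K))).count (p : Ideal (𝓞 K)) with hψ
  set B : Finset ({x : Ideal (𝓞 K) // x ∈ F} → ℕ) :=
    Fintype.piFinset (fun p => Finset.range (s.count (p : Ideal (𝓞 K)) + 1)) with hB
  have hmem : ∀ J, ψ J ∈ B := by
    intro J
    rw [hB, Fintype.mem_piFinset]
    intro p
    rw [Finset.mem_range, Nat.lt_succ_iff]
    exact Multiset.le_iff_count.mp (hJle J) (p : Ideal (𝓞 K))
  have hinj : Function.Injective ψ := by
    intro J J' h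
    apply Subtype.ext
    rw [hJeq J, hJeq J']
    apply Finset.prod_congr rfl
    intro p hp
    have h2 := congrFun h ⟨p, hp⟩
    simp only [hψ] at h2
    rw [h2]
  calc ∑ J : {J : Ideal (𝓞 K) // J ∣ I}, (Ideal.absNorm (J : Ideal (𝓞 K)) : ℝ) ^ (-r)
      = ∑ J : {J : Ideal (𝓞 K) // J ∣ I},
          ∏ p ∈ F.attach, ((Ideal.absNorm (p : Ideal (𝓞 K)) : ℝ) ^ (-r)) ^ (ψ J p) :=
        Finset.sum_congr rfl (fun J _ => hval J)
    _ = ∑ v ∈ Finset.univ.image ψ,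
          ∏ p ∈ F.attach, ((Ideal.absNorm (p : Ideal (𝓞 K)) : ℝ) ^ (-r)) ^ (v p) := by
        rw [Finset.sum_image (fun J _ J' _ h => hinj h)]
    _ ≤ ∑ v ∈ B, ∏ p ∈ F.attach, ((Ideal.absNorm (p : Ideal (𝓞 K)) : ℝ) ^ (-r)) ^ (v p) := by
        apply Finset.sum_le_sum_of_subset_of_nonneg
        · intro v hv
          obtain ⟨J, _, rfl⟩ := Finset.mem_image.mp hv
          exact hmem J
        · intro v _ _
          exact Finset.prod_nonneg (fun p _ =>
            pow_nonneg (Real.rpow_nonneg (Nat.cast_nonneg _) _) _)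
    _ = ∏ p ∈ F.attach, ∑ j ∈ Finset.range (s.count (p : Ideal (𝓞 K)) + 1),
          ((Ideal.absNorm (p : Ideal (𝓞 K)) : ℝ) ^ (-r)) ^ j := by
        rw [← Finset.univ_eq_attach, ← Finset.prod_univ_sum]
    _ ≤ ∏ p ∈ F.attach, (1 - (Ideal.absNorm (p : Ideal (𝓞 K)) : ℝ) ^ (-r))⁻¹ := by
        apply Finset.prod_le_prod
        · intro p _
          exact Finset.sum_nonneg (fun j _ =>
            pow_nonneg (Real.rpow_nonneg (Nat.cast_nonneg _) _) _)
        · intro p _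
          have hx0 : (0:ℝ) ≤ (Ideal.absNorm (p : Ideal (𝓞 K)) : ℝ) ^ (-r) :=
            Real.rpow_nonneg (Nat.cast_nonneg _) _
          have hx1 : (Ideal.absNorm (p : Ideal (𝓞 K)) : ℝ) ^ (-r) < 1 :=
            gH_lt_one (by linarith) (hF2 (p : Ideal (𝓞 K)) p.2)
          calc ∑ j ∈ Finset.range (s.count (p : Ideal (𝓞 K)) + 1),
                ((Ideal.absNorm (p : Ideal (𝓞 K)) : ℝ) ^ (-r)) ^ j
              ≤ ∑' j : ℕ, ((Ideal.absNorm (p : Ideal (𝓞 K)) : ℝ) ^ (-r)) ^ j :=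
                Summable.sum_le_tsum _ (fun j _ => pow_nonneg hx0 j)
                  (hasSum_geometric_of_lt_one hx0 hx1).summable
            _ = (1 - (Ideal.absNorm (p : Ideal (𝓞 K)) : ℝ) ^ (-r))⁻¹ :=
                tsum_geometric_of_lt_one hx0 hx1
    _ ≤ ∏' P : {P : Ideal (𝓞 K) // P.IsPrime ∧ n < Ideal.absNorm P},
          (1 - (Ideal.absNorm (P : Ideal (𝓞 K)) : ℝ) ^ (-r))⁻¹ := by
        set e : {x : Ideal (𝓞 K) // x ∈ F} → {P : Ideal (𝓞 K) // P.IsPrime ∧ n < Ideal.absNorm P} :=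
          fun p => ⟨(p : Ideal (𝓞 K)), hFisP _ p.2, hFnorm _ p.2⟩ with he
        have hepinj : Function.Injective e := by
          intro p q h
          have h2 : (e p).1 = (e q).1 := by rw [h]
          exact Subtype.ext h2
        rw [show ∏ p ∈ F.attach, (1 - (Ideal.absNorm (p : Ideal (𝓞 K)) : ℝ) ^ (-r))⁻¹
            = ∏ q ∈ F.attach.image e, (1 - (Ideal.absNorm (q : Ideal (𝓞 K)) : ℝ) ^ (-r))⁻¹ by
          rw [Finset.prod_image (fun p _ q _ h => hepinj h)]]
        apply real_prod_le_tprod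
        · intro q
          have h2 : 2 ≤ Ideal.absNorm (q : Ideal (𝓞 K)) := two_le_absNorm_T q
          have hx0 : (0:ℝ) ≤ (Ideal.absNorm (q : Ideal (𝓞 K)) : ℝ) ^ (-r) :=
            Real.rpow_nonneg (Nat.cast_nonneg _) _
          have hx1 : (Ideal.absNorm (q : Ideal (𝓞 K)) : ℝ) ^ (-r) < 1 :=
            gH_lt_one (by linarith) h2
          rw [one_le_inv_iff₀]
          constructor
          · linarith
          · linarith
        · exact multipliable_primes_T hr n

end Stmt16Aux

/-- If `d₁ < d₂ < ⋯ < d_M` are `r`-mighty norms of `K`, then the closure of `σ_{r,K}(I_K)`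
has at least `M + 1` connected components. -/
theorem stmt16 (r : ℝ) (hr : 1 < r) (K : Type*) [Field K] [NumberField K]
    (M : ℕ) (d : Fin M → ℕ) (hmono : StrictMono d)
    (hmighty : ∀ i, IsMightyNorm K r (d i)) :
    ((M + 1 : ℕ) : Cardinal) ≤
      Cardinal.mk (ConnectedComponents
        ↥(closure (sigmaK K r '' {I : Ideal (𝓞 K) | I ≠ 0}))) := by
  classical
  choose P hP1 hP2 hP3 using fun i => (hmighty i).2.1
  set S := closure (sigmaK K r '' {I : Ideal (𝓞 K) | I ≠ 0}) with hSdef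
  set c : Fin M → ℝ := fun i =>
    ∏' Q : {Q : Ideal (𝓞 K) // Q.IsPrime ∧ d i < Ideal.absNorm Q},
      (1 - (Ideal.absNorm (Q : Ideal (𝓞 K)) : ℝ) ^ (-r))⁻¹ with hc
  have hclt : ∀ i, c i < 1 + (d i : ℝ) ^ (-r) := fun i => (hmighty i).2.2
  have hd1 : ∀ i, 1 < d i := fun i => (hmighty i).1
  have htopne : (⊤ : Ideal (𝓞 K)) ≠ 0 := by
    rw [Submodule.zero_eq_bot]
    exact top_ne_bot
  have hmemtop : sigmaK K r ⊤ ∈ S := subset_closure ⟨⊤, htopne, rfl⟩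
  have hPne : ∀ i, P i ≠ 0 := fun i => by
    rw [Submodule.zero_eq_bot]; exact hP2 i
  have hmemP : ∀ i, sigmaK K r (P i) ∈ S := fun i => subset_closure ⟨P i, hPne i, rfl⟩
  have hlow_top : ∀ i, sigmaK K r ⊤ ≤ c i := by
    intro i
    apply Stmt16Aux.lower hr (d i) htopne
    intro Q hQ hQd
    exfalso
    rw [← Ideal.one_eq_top] at hQd
    exact hQ.ne_top (Ideal.isUnit_iff.mp (isUnit_of_dvd_one hQd))
  have hlow_P : ∀ i j : Fin M, d i < d j → sigmaK K r (P j) ≤ c i := by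
    intro i j hij
    apply Stmt16Aux.lower hr (d i) (hPne j)
    intro Q hQ hQd
    have hPpr : Prime (P j) := (Ideal.prime_iff_isPrime (hP2 j)).mpr (hP1 j)
    obtain ⟨k, hk⟩ := hQd
    rcases hPpr.irreducible.isUnit_or_isUnit hk with hu | hu
    · exact absurd (Ideal.isUnit_iff.mp hu) hQ.ne_top
    · rw [Ideal.isUnit_iff] at hu
      rw [hu, Ideal.mul_top] at hk
      rw [← hk, hP3 j]
      exact hij
  have hup : ∀ i, 1 + (d i : ℝ) ^ (-r) ≤ sigmaK K r (P i) := by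
    intro i
    have h := Stmt16Aux.upper (r := r) (hPne i) (hP1 i) (dvd_refl (P i))
    rwa [hP3 i] at h
  set t : Fin M → ℝ := fun i => (c i + (1 + (d i : ℝ) ^ (-r))) / 2 with ht
  have htlow : ∀ i, c i < t i := by
    intro i
    have := hclt i
    simp only [ht]
    linarith
  have hthigh : ∀ i, t i < 1 + (d i : ℝ) ^ (-r) := by
    intro i
    have := hclt i
    simp only [ht]
    linarith
  have hSsub : ∀ i, S ⊆ Set.Iic (c i) ∪ Set.Ici (1 + (d i : ℝ) ^ (-r)) := by
    intro i
    apply closure_minimal _ (isClosed_Iic.union isClosed_Ici)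
    rintro x ⟨I, hI, rfl⟩
    by_cases hcase : ∀ Q : Ideal (𝓞 K), Q.IsPrime → Q ∣ I → d i < Ideal.absNorm Q
    · exact Or.inl (Stmt16Aux.lower hr (d i) hI hcase)
    · right
      push_neg at hcase
      obtain ⟨Q, hQ, hQd, hQn⟩ := hcase
      have hQne : Q ≠ ⊥ := by
        intro h
        rw [h, ← Submodule.zero_eq_bot] at hQd
        exact hI (zero_dvd_iff.mp hQd)
      have h2 : 2 ≤ Ideal.absNorm Q := Stmt16Aux.two_le_absNorm hQ hQne
      have hstep : (d i : ℝ) ^ (-r) ≤ (Ideal.absNorm Q : ℝ) ^ (-r) :=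
        Stmt16Aux.rpow_neg_anti (by linarith) (by omega) hQn
      have hupp := Stmt16Aux.upper (r := r) hI hQ hQd
      exact Set.mem_Ici.mpr (by linarith)
  have htnot : ∀ i, t i ∉ S := by
    intro i hmem
    rcases hSsub i hmem with h | h
    · rw [Set.mem_Iic] at h
      linarith [htlow i]
    · rw [Set.mem_Ici] at h
      linarith [hthigh i]
  have hsep : ∀ (x z : S) (i : Fin M), (x : ℝ) < t i → t i < (z : ℝ) →
      (x : ConnectedComponents S) ≠ (z : ConnectedComponents S) := by
    intro x z i hx hz heq
    rw [ConnectedComponents.coe_eq_coe] at heq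
    have hzmem : z ∈ connectedComponent x := heq ▸ mem_connectedComponent
    have hC : IsPreconnected ((Subtype.val : S → ℝ) '' connectedComponent x) :=
      (isPreconnected_connectedComponent).image _ continuous_subtype_val.continuousOn
    have hOrd := hC.ordConnected
    have hxmem : (x : ℝ) ∈ Subtype.val '' connectedComponent x :=
      Set.mem_image_of_mem _ mem_connectedComponent
    have hzmem' : (z : ℝ) ∈ Subtype.val '' connectedComponent x :=
      Set.mem_image_of_mem _ hzmem
    obtain ⟨w, _, hw⟩ := hOrd.out hxmem hzmem' ⟨hx.le, hz.le⟩
    exact htnot i (hw ▸ w.2)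
  set y : Fin (M + 1) → S := fun a =>
    Fin.cases ⟨sigmaK K r ⊤, hmemtop⟩ (fun i => ⟨sigmaK K r (P i), hmemP i⟩) a with hy
  have hy0 : (y 0 : ℝ) = sigmaK K r ⊤ := by simp [hy]
  have hysucc : ∀ j : Fin M, (y j.succ : ℝ) = sigmaK K r (P j) := by
    intro j
    simp [hy]
  have key : ∀ a b : Fin (M + 1), a < b →
      (y a : ConnectedComponents S) ≠ (y b : ConnectedComponents S) := by
    intro a b hab
    rcases Fin.eq_zero_or_eq_succ b with rfl | ⟨j, rfl⟩
    · exact absurd hab (by simp)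
    · rcases Fin.eq_zero_or_eq_succ a with rfl | ⟨i, rfl⟩
      · apply hsep (y 0) (y j.succ) j
        · rw [hy0]
          exact lt_of_le_of_lt (hlow_top j) (htlow j)
        · rw [hysucc j]
          exact lt_of_lt_of_le (hthigh j) (hup j)
      · have hij : i < j := by
          rwa [Fin.succ_lt_succ_iff] at hab
        have h1 : (y j.succ : ℝ) < t i := by
          rw [hysucc j]
          exact lt_of_le_of_lt (hlow_P i j (hmono hij)) (htlow i)
        have h2 : t i < (y i.succ : ℝ) := by
          rw [hysucc i]
          exact lt_of_lt_of_le (hthigh i) (hup i)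
        exact (hsep (y j.succ) (y i.succ) i h1 h2).symm
  have hinj : Function.Injective (fun a : Fin (M + 1) => (y a : ConnectedComponents S)) := by
    intro a b hab
    by_contra hne
    rcases lt_or_gt_of_ne hne with h | h
    · exact key a b h hab
    · exact key b a h hab.symm
  calc ((M + 1 : ℕ) : Cardinal) = Cardinal.mk (Fin (M + 1)) := by rw [Cardinal.mk_fin]
    _ ≤ _ := Cardinal.mk_le_of_injective hinj
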